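/- Let l > 0 be a natural number and let X ⊆ ℕ with |X| = 2^l. Then there exists a sequence ⟨A_σ : σ ∈ 2^{≤l}⟩ of subsets of X such that: (1) for each m ≤ l, the sets A_σ for σ ∈ 2^m are pairwise disjoint and their union is X; (2) |A_σ| = 2^{l − |σ|} for each σ ∈ 2^{≤l}, and σ ⊆ τ implies A_τ ⊆ A_σ; (3) for each σ ∈ 2^{≤l}, any two distinct i, j ∈ A_σ satisfy |i − j| > 2^{|σ|−1}. -/

import Mathlib

open Filter Set Cardinal

lemma fin_grow {n : ℕ} (f : Fin n → ℕ) (hf : StrictMono f) :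
    ∀ d (a b : Fin n), (a : ℕ) + d = (b : ℕ) → f a + d ≤ f b := by
  intro d
  induction d with
  | zero =>
      intro a b h
      have : a = b := Fin.ext (by omega)
      simp [this]
  | succ d ih =>
      intro a b h
      have hb' : (a : ℕ) + d < n := by have := b.isLt; omega
      have h1 := ih a ⟨(a : ℕ) + d, hb'⟩ rfl
      have h2 : f ⟨(a : ℕ) + d, hb'⟩ < f b := hf (by rw [Fin.lt_def]; simp; omega)
      omega
def nbv : List Bool → ℕ
  | [] => 0
  | b :: t => (cond b 1 0) + 2 * nbv t

lemma nbv_lt : ∀ σ : List Bool, nbv σ < 2 ^ σ.length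
  | [] => by simp [nbv]
  | b :: t => by
      have := nbv_lt t
      cases b <;> simp [nbv, pow_succ] <;> omega

lemma nbv_append : ∀ σ ρ : List Bool, nbv (σ ++ ρ) = nbv σ + 2 ^ σ.length * nbv ρ
  | [], ρ => by simp [nbv]
  | b :: t, ρ => by
      simp [nbv, nbv_append t ρ, pow_succ]; ring

lemma nbv_inj : ∀ σ τ : List Bool, σ.length = τ.length → nbv σ = nbv τ → σ = τ
  | [], [], _, _ => rfl
  | b :: s, c :: t, hl, hv => by
      have hb : b = c := by
        cases b <;> cases c <;> simp_all [nbv] <;> omega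
      subst hb
      have : nbv s = nbv t := by cases b <;> simp [nbv] at hv <;> omega
      rw [nbv_inj s t (by simpa using hl) this]

def bitsv : ℕ → ℕ → List Bool
  | 0, _ => []
  | m + 1, n => (decide (n % 2 = 1)) :: bitsv m (n / 2)

lemma bitsv_length : ∀ m n, (bitsv m n).length = m
  | 0, _ => rfl
  | m + 1, n => by simp [bitsv, bitsv_length m]

lemma nbv_bitsv : ∀ m n, nbv (bitsv m n) = n % 2 ^ m
  | 0, n => by simp [bitsv, nbv, Nat.mod_one]
  | m + 1, n => by
      have h1 := nbv_bitsv m (n / 2)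
      have h2 := Nat.div_add_mod n 2
      have h3 := Nat.div_add_mod (n / 2) (2 ^ m)
      have h4 := Nat.div_add_mod n (2 ^ (m + 1))
      have h5 : n / 2 / 2 ^ m = n / 2 ^ (m + 1) := by
        rw [Nat.div_div_eq_div_mul, pow_succ, mul_comm]
      rw [h5] at h3
      have h9 : 2 ^ (m+1) * (n / 2 ^ (m+1)) = 2 * (2 ^ m * (n / 2 ^ (m+1))) := by
        rw [pow_succ]; ring
      have h6 : n % 2 < 2 := Nat.mod_lt _ (by norm_num)
      have h7 : n / 2 % 2 ^ m < 2 ^ m := Nat.mod_lt _ (Nat.pow_pos (by norm_num))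
      have h8 : n % 2 ^ (m+1) < 2 ^ (m+1) := Nat.mod_lt _ (Nat.pow_pos (by norm_num))
      rcases Nat.mod_two_eq_zero_or_one n with h | h <;>
        simp [bitsv, nbv, h, h1] <;> omega

lemma count_mod (M C v : ℕ) (hv : v < M) :
    ((Finset.range (M * C)).filter (fun k => k % M = v)).card = C := by
  have hM : 0 < M := lt_of_le_of_lt (Nat.zero_le v) hv
  have key : ((Finset.range (M * C)).filter (fun k => k % M = v)).card
      = (Finset.range C).card := by
    apply Finset.card_bij' (i := fun k _ => k / M) (j := fun j _ => M * j + v)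
    · intro k hk
      simp only [Finset.mem_filter, Finset.mem_range] at hk
      simp only [Finset.mem_range]
      exact Nat.div_lt_of_lt_mul (by omega)
    · intro j hj
      simp only [Finset.mem_range] at hj
      simp only [Finset.mem_filter, Finset.mem_range]
      constructor
      · calc M * j + v < M * j + M := by omega
          _ = M * (j + 1) := by ring
          _ ≤ M * C := Nat.mul_le_mul_left _ hj
      · simp [Nat.mul_add_mod, Nat.mod_eq_of_lt hv]
    · intro k hk
      simp only [Finset.mem_filter, Finset.mem_range] at hk
      have := Nat.div_add_mod k M
      omega
    · intro j hj
      rw [Nat.mul_add_div hM, Nat.div_eq_of_lt hv]; omega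
  rw [key, Finset.card_range]

/-- Lemma 13 of the paper: a binary tree decomposition of a set `X` of size `2^l`,
indexed by binary strings (`List Bool`) of length at most `l`. -/
theorem stmt11 (l : ℕ) (hl : 0 < l) (X : Set ℕ) (hX : X.ncard = 2 ^ l) :
    ∃ A : List Bool → Set ℕ,
      (∀ σ : List Bool, σ.length ≤ l → A σ ⊆ X) ∧
      (∀ m ≤ l,
        (⋃ σ ∈ {s : List Bool | s.length = m}, A σ) = X ∧
        (∀ σ τ : List Bool, σ.length = m → τ.length = m → σ ≠ τ →
          Disjoint (A σ) (A τ))) ∧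
      (∀ σ : List Bool, σ.length ≤ l → (A σ).ncard = 2 ^ (l - σ.length)) ∧
      (∀ σ τ : List Bool, τ.length ≤ l → σ <+: τ → A τ ⊆ A σ) ∧
      (∀ σ : List Bool, σ.length ≤ l → ∀ i ∈ A σ, ∀ j ∈ A σ, i ≠ j →
        (2 : ℝ) ^ ((σ.length : ℤ) - 1) < |(i : ℝ) - (j : ℝ)|) := by
  have hfin : X.Finite := by
    by_contra h
    have h2 : X.ncard = 0 := Set.Infinite.ncard h
    have : (0:ℕ) < 2 ^ l := Nat.pow_pos (by norm_num)
    omega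
  set s : Finset ℕ := hfin.toFinset with hsdef
  have hs : ↑s = X := hfin.coe_toFinset
  have hcard : s.card = 2 ^ l := by
    rw [← Set.ncard_coe_finset, hs, hX]
  set f : Fin (2 ^ l) ↪o ℕ := s.orderEmbOfFin hcard with hfdef
  have hrange : Set.range f = ↑s := Finset.range_orderEmbOfFin s hcard
  have hmono : StrictMono f := (s.orderEmbOfFin hcard).strictMono
  set A : List Bool → Set ℕ := fun σ =>
    ↑((Finset.univ.filter (fun k : Fin (2 ^ l) =>
        (k : ℕ) % 2 ^ σ.length = nbv σ)).image f) with hAdef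
  have hmem : ∀ σ x, x ∈ A σ ↔
      ∃ k : Fin (2 ^ l), (k : ℕ) % 2 ^ σ.length = nbv σ ∧ f k = x := by
    intro σ x
    simp [hAdef, Finset.mem_image, Finset.mem_filter]
  have hsub : ∀ σ : List Bool, A σ ⊆ X := by
    intro σ x hx
    obtain ⟨k, -, rfl⟩ := (hmem σ x).mp hx
    have : f k ∈ Set.range f := ⟨k, rfl⟩
    rw [hrange, hs] at this
    exact this
  refine ⟨A, fun σ _ => hsub σ, ?_, ?_, ?_, ?_⟩
  · -- partition
    intro m hm
    constructor
    · ext x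
      simp only [Set.mem_iUnion, Set.mem_setOf_eq]
      constructor
      · rintro ⟨σ, -, hx⟩; exact hsub σ hx
      · intro hx
        rw [← hs, ← hrange] at hx
        obtain ⟨k, rfl⟩ := hx
        refine ⟨bitsv m (k : ℕ), bitsv_length m _, ?_⟩
        rw [hmem]
        exact ⟨k, by rw [bitsv_length, nbv_bitsv], rfl⟩
    · intro σ τ hσ hτ hne
      rw [Set.disjoint_left]
      intro x hx1 hx2
      obtain ⟨k1, hk1, rfl⟩ := (hmem σ x).mp hx1
      obtain ⟨k2, hk2, h12⟩ := (hmem τ _).mp hx2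
      have : k2 = k1 := hmono.injective h12
      subst this
      rw [hσ] at hk1
      rw [hτ] at hk2
      exact hne (nbv_inj σ τ (by rw [hσ, hτ]) (by omega))
  · -- cardinality
    intro σ hσ
    rw [hAdef]
    simp only
    rw [Set.ncard_coe_finset, Finset.card_image_of_injective _ hmono.injective]
    have h1 : ((Finset.range (2 ^ l)).filter
        (fun k => k % 2 ^ σ.length = nbv σ)).card
        = (Finset.univ.filter (fun k : Fin (2 ^ l) =>
            (k : ℕ) % 2 ^ σ.length = nbv σ)).card := by
      have himg : (Finset.range (2 ^ l)).filter (fun k => k % 2 ^ σ.length = nbv σ)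
          = Finset.image Fin.val (Finset.univ.filter (fun k : Fin (2 ^ l) =>
              (k : ℕ) % 2 ^ σ.length = nbv σ)) := by
        ext k
        simp only [Finset.mem_filter, Finset.mem_range, Finset.mem_image,
          Finset.mem_univ, true_and]
        constructor
        · rintro ⟨hk, hmod⟩; exact ⟨⟨k, hk⟩, hmod, rfl⟩
        · rintro ⟨a, ha, rfl⟩; exact ⟨a.isLt, ha⟩
      rw [himg, Finset.card_image_of_injective _ Fin.val_injective]
    rw [← h1]
    have h2 : 2 ^ l = 2 ^ σ.length * 2 ^ (l - σ.length) := by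
      rw [← pow_add]; congr 1; omega
    rw [h2]
    exact count_mod _ _ _ (nbv_lt σ)
  · -- prefix
    intro σ τ hτ hpre x hx
    obtain ⟨ρ, rfl⟩ := hpre
    obtain ⟨k, hk, rfl⟩ := (hmem _ x).mp hx
    rw [hmem]
    refine ⟨k, ?_, rfl⟩
    have hlen : σ.length ≤ (σ ++ ρ).length := by simp
    have hdvd : (2:ℕ) ^ σ.length ∣ 2 ^ (σ ++ ρ).length := pow_dvd_pow 2 hlen
    calc (k : ℕ) % 2 ^ σ.length = ((k : ℕ) % 2 ^ (σ ++ ρ).length) % 2 ^ σ.length :=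
          (Nat.mod_mod_of_dvd _ hdvd).symm
      _ = nbv (σ ++ ρ) % 2 ^ σ.length := by rw [hk]
      _ = nbv σ := by
          rw [nbv_append, Nat.add_mul_mod_self_left, Nat.mod_eq_of_lt (nbv_lt σ)]
  · -- separation
    intro σ hσ i hi j hj hij
    obtain ⟨a, ha, rfl⟩ := (hmem σ i).mp hi
    obtain ⟨b, hb, rfl⟩ := (hmem σ j).mp hj
    set m := σ.length with hm
    have key : ∀ a b : Fin (2 ^ l), (a : ℕ) < (b : ℕ) →
        (a : ℕ) % 2 ^ m = nbv σ → (b : ℕ) % 2 ^ m = nbv σ →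
        f a + 2 ^ m ≤ f b := by
      intro a b hab ha hb
      have hmeq : (a : ℕ) ≡ (b : ℕ) [MOD 2 ^ m] := by
        unfold Nat.ModEq; omega
      have hdvd : (2:ℕ) ^ m ∣ (b : ℕ) - (a : ℕ) := (Nat.modEq_iff_dvd' hab.le).mp hmeq
      have hle : 2 ^ m ≤ (b : ℕ) - (a : ℕ) := Nat.le_of_dvd (by omega) hdvd
      have := fin_grow f hmono ((b : ℕ) - (a : ℕ)) a b (by omega)
      omega
    have habne : (a : ℕ) ≠ (b : ℕ) := fun h => hij (by rw [Fin.ext_iff.mpr h])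
    have habs : (2 : ℝ) ^ m ≤ |(f a : ℝ) - (f b : ℝ)| := by
      rcases lt_or_gt_of_ne habne with h | h
      · have := key a b h ha hb
        rw [abs_sub_comm]
        calc (2:ℝ) ^ m ≤ (f b : ℝ) - (f a : ℝ) := by
              have : (f a : ℝ) + 2 ^ m ≤ (f b : ℝ) := by exact_mod_cast this
              linarith
          _ ≤ |(f b : ℝ) - (f a : ℝ)| := le_abs_self _
      · have := key b a h hb ha
        calc (2:ℝ) ^ m ≤ (f a : ℝ) - (f b : ℝ) := by
              have : (f b : ℝ) + 2 ^ m ≤ (f a : ℝ) := by exact_mod_cast this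
              linarith
          _ ≤ |(f a : ℝ) - (f b : ℝ)| := le_abs_self _
    have hlt : (2 : ℝ) ^ ((m : ℤ) - 1) < (2 : ℝ) ^ (m : ℤ) :=
      zpow_lt_zpow_right₀ (by norm_num) (by omega)
    calc (2 : ℝ) ^ ((m : ℤ) - 1) < (2 : ℝ) ^ (m : ℤ) := hlt
      _ = (2 : ℝ) ^ m := zpow_natCast 2 m
      _ ≤ |(f a : ℝ) - (f b : ℝ)| := habs
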